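/- Fix ρ > 0, σ = ±1, s₁ ∈ ℂ, and a constant c ∈ ℝ. Along the line x = 2σρt + c (so η = c fixed, ξ = c + 4σρt), the first-order rational solution u₁ satisfies u₁(x,t) e^{−2iρ²t−iφ} → ρ[1 − (4ρ(c − s₁*) + 4iσ)/(2ρ(c − s₁*) + iσ)] as |t| → ∞, with error of order O(1/|t|). -/

import Mathlib

set_option maxHeartbeats 1000000

open Complex Filter Asymptotics

/-- The first-order rational solution of the defocusing nonlocal NLS equation. -/
noncomputable def u1sol (ρ σ φ : ℝ) (s1 : ℂ) (x t : ℝ) : ℂ :=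
  let K : ℂ := 2 * ρ * s1 + Complex.I * σ
  let ξ : ℂ := (x : ℂ) + 2 * σ * ρ * t
  let η : ℂ := (x : ℂ) - 2 * σ * ρ * t
  (ρ : ℂ) * Complex.exp (2 * Complex.I * ρ ^ 2 * t + Complex.I * φ) *
    (1 - (2 * ρ * ξ + K - Complex.I * σ) * (2 * ρ * η - (starRingEnd ℂ) K + Complex.I * σ) /
      (2 * ρ ^ 2 * ξ * η + ρ * K * η - ρ * (starRingEnd ℂ) K * ξ
        - ((Complex.normSq K : ℂ) + 1) / 2))

/-- auxiliary: the characteristic constant `A`. -/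
noncomputable def solA (ρ σ c : ℝ) (s1 : ℂ) : ℂ :=
  2*(ρ:ℂ)*((c:ℂ) - (starRingEnd ℂ) s1) + Complex.I*(σ:ℂ)

/-- auxiliary: the leading coefficient of the denominator in `t`. -/
noncomputable def solAl (ρ σ c : ℝ) (s1 : ℂ) : ℂ :=
  4*(σ:ℂ)*(ρ:ℂ)^2 * solA ρ σ c s1

/-- auxiliary: the constant term of the denominator. -/
noncomputable def solBe (ρ σ c : ℝ) (s1 : ℂ) : ℂ :=
  2*(ρ:ℂ)^2*(c:ℂ)*(c:ℂ) + (ρ:ℂ)*(2*(ρ:ℂ)*s1 + Complex.I*(σ:ℂ))*(c:ℂ)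
    - (ρ:ℂ)*(2*(ρ:ℂ)*((starRingEnd ℂ) s1) - Complex.I*(σ:ℂ))*(c:ℂ)
    - ((2*(ρ:ℂ)*s1 + Complex.I*(σ:ℂ))*(2*(ρ:ℂ)*((starRingEnd ℂ) s1) - Complex.I*(σ:ℂ)) + 1)/2

/-- auxiliary: the constant numerator of the error term. -/
noncomputable def solCn (ρ σ c : ℝ) (s1 : ℂ) : ℂ :=
  2*(ρ:ℂ)*(solA ρ σ c s1 + Complex.I*(σ:ℂ))
    * (((ρ:ℂ)*(2*(ρ:ℂ)*s1 + Complex.I*(σ:ℂ))*(c:ℂ)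
        - ((2*(ρ:ℂ)*s1 + Complex.I*(σ:ℂ))*(2*(ρ:ℂ)*((starRingEnd ℂ) s1) - Complex.I*(σ:ℂ)) + 1)/2)
       - (ρ:ℂ)*s1*(solA ρ σ c s1))

lemma sol_alg (r s cc tt z w : ℂ)
    (hA : 2*r*(cc - w) + Complex.I*s ≠ 0)
    (hD : 2*r^2*(cc + 4*s*r*tt)*cc + r*(2*r*z + Complex.I*s)*cc
        - r*(2*r*w - Complex.I*s)*(cc + 4*s*r*tt)
        - ((2*r*z + Complex.I*s)*(2*r*w - Complex.I*s) + 1)/2 ≠ 0) :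
    r * (1 - (2*r*(cc + 4*s*r*tt) + (2*r*z + Complex.I*s) - Complex.I*s)
            * (2*r*cc - (2*r*w - Complex.I*s) + Complex.I*s)
          / (2*r^2*(cc + 4*s*r*tt)*cc + r*(2*r*z + Complex.I*s)*cc
              - r*(2*r*w - Complex.I*s)*(cc + 4*s*r*tt)
              - ((2*r*z + Complex.I*s)*(2*r*w - Complex.I*s) + 1)/2))
      - r * (1 - (4*r*(cc - w) + 4*Complex.I*s) / (2*r*(cc - w) + Complex.I*s))
    = (2*r*((2*r*(cc - w) + Complex.I*s) + Complex.I*s)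
        * ((r*(2*r*z + Complex.I*s)*cc - ((2*r*z + Complex.I*s)*(2*r*w - Complex.I*s) + 1)/2)
           - r*z*(2*r*(cc - w) + Complex.I*s)))
      / ((2*r*(cc - w) + Complex.I*s)
         * (2*r^2*(cc + 4*s*r*tt)*cc + r*(2*r*z + Complex.I*s)*cc
              - r*(2*r*w - Complex.I*s)*(cc + 4*s*r*tt)
              - ((2*r*z + Complex.I*s)*(2*r*w - Complex.I*s) + 1)/2)) := by
  set A : ℂ := 2*r*(cc - w) + Complex.I*s with hA_def
  set D : ℂ := 2*r^2*(cc + 4*s*r*tt)*cc + r*(2*r*z + Complex.I*s)*cc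
        - r*(2*r*w - Complex.I*s)*(cc + 4*s*r*tt)
        - ((2*r*z + Complex.I*s)*(2*r*w - Complex.I*s) + 1)/2 with hD_def
  rw [← div_div]
  linear_combination
    (-(r*(4*r*(cc-w)+4*Complex.I*s)*A⁻¹)) * mul_inv_cancel₀ hD
    + (r * ((2*r*(cc + 4*s*r*tt) + (2*r*z + Complex.I*s) - Complex.I*s)
        * (2*r*cc - (2*r*w - Complex.I*s) + Complex.I*s)) * D⁻¹) * mul_inv_cancel₀ hA

lemma sol_Dlin (ρ σ c t : ℝ) (s1 : ℂ) :
    2*(ρ:ℂ)^2*((c:ℂ) + 4*(σ:ℂ)*(ρ:ℂ)*(t:ℂ))*(c:ℂ)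
        + (ρ:ℂ)*(2*(ρ:ℂ)*s1 + Complex.I*(σ:ℂ))*(c:ℂ)
        - (ρ:ℂ)*(2*(ρ:ℂ)*((starRingEnd ℂ) s1) - Complex.I*(σ:ℂ))*((c:ℂ) + 4*(σ:ℂ)*(ρ:ℂ)*(t:ℂ))
        - ((2*(ρ:ℂ)*s1 + Complex.I*(σ:ℂ))*(2*(ρ:ℂ)*((starRingEnd ℂ) s1) - Complex.I*(σ:ℂ)) + 1)/2
    = solAl ρ σ c s1 * (t:ℂ) + solBe ρ σ c s1 := by
  simp only [solAl, solBe, solA]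
  ring

lemma sol_key (ρ σ φ c : ℝ) (s1 : ℂ) (hA : solA ρ σ c s1 ≠ 0) (t : ℝ)
    (hne : solAl ρ σ c s1 * (t:ℂ) + solBe ρ σ c s1 ≠ 0) :
    u1sol ρ σ φ s1 (2 * σ * ρ * t + c) t *
          Complex.exp (-(2 * Complex.I * ρ ^ 2 * t) - Complex.I * φ)
        - (ρ : ℂ) * (1 - (4 * ρ * ((c : ℂ) - (starRingEnd ℂ) s1) + 4 * Complex.I * σ) /
            (2 * ρ * ((c : ℂ) - (starRingEnd ℂ) s1) + Complex.I * σ))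
    = solCn ρ σ c s1 / (solA ρ σ c s1 * (solAl ρ σ c s1 * (t:ℂ) + solBe ρ σ c s1)) := by
  have hD : 2*(ρ:ℂ)^2*((c:ℂ) + 4*(σ:ℂ)*(ρ:ℂ)*(t:ℂ))*(c:ℂ)
        + (ρ:ℂ)*(2*(ρ:ℂ)*s1 + Complex.I*(σ:ℂ))*(c:ℂ)
        - (ρ:ℂ)*(2*(ρ:ℂ)*((starRingEnd ℂ) s1) - Complex.I*(σ:ℂ))*((c:ℂ) + 4*(σ:ℂ)*(ρ:ℂ)*(t:ℂ))
        - ((2*(ρ:ℂ)*s1 + Complex.I*(σ:ℂ))*(2*(ρ:ℂ)*((starRingEnd ℂ) s1) - Complex.I*(σ:ℂ)) + 1)/2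
        ≠ 0 := by
    rw [sol_Dlin]; exact hne
  have hA' : 2*(ρ:ℂ)*((c:ℂ) - (starRingEnd ℂ) s1) + Complex.I*(σ:ℂ) ≠ 0 := hA
  have hexp : Complex.exp (2 * Complex.I * ρ ^ 2 * t + Complex.I * φ) *
      Complex.exp (-(2 * Complex.I * ρ ^ 2 * t) - Complex.I * φ) = 1 := by
    rw [← Complex.exp_add]
    norm_num
  have h2 : ∀ X : ℂ, (ρ:ℂ) * Complex.exp (2 * Complex.I * ρ ^ 2 * t + Complex.I * φ) * X *
      Complex.exp (-(2 * Complex.I * ρ ^ 2 * t) - Complex.I * φ) = (ρ:ℂ) * X := by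
    intro X
    calc (ρ:ℂ) * Complex.exp (2 * Complex.I * ρ ^ 2 * t + Complex.I * φ) * X *
        Complex.exp (-(2 * Complex.I * ρ ^ 2 * t) - Complex.I * φ)
        = (ρ:ℂ) * X * (Complex.exp (2 * Complex.I * ρ ^ 2 * t + Complex.I * φ) *
          Complex.exp (-(2 * Complex.I * ρ ^ 2 * t) - Complex.I * φ)) := by ring
      _ = (ρ:ℂ) * X := by rw [hexp, mul_one]
  have halg := sol_alg (ρ:ℂ) (σ:ℂ) (c:ℂ) (t:ℂ) s1 ((starRingEnd ℂ) s1) hA' hD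
  calc u1sol ρ σ φ s1 (2 * σ * ρ * t + c) t *
          Complex.exp (-(2 * Complex.I * ρ ^ 2 * t) - Complex.I * φ)
        - (ρ : ℂ) * (1 - (4 * ρ * ((c : ℂ) - (starRingEnd ℂ) s1) + 4 * Complex.I * σ) /
            (2 * ρ * ((c : ℂ) - (starRingEnd ℂ) s1) + Complex.I * σ))
      = (ρ:ℂ) * (1 - (2*(ρ:ℂ)*((c:ℂ) + 4*(σ:ℂ)*(ρ:ℂ)*(t:ℂ)) + (2*(ρ:ℂ)*s1 + Complex.I*(σ:ℂ)) - Complex.I*(σ:ℂ))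
            * (2*(ρ:ℂ)*(c:ℂ) - (2*(ρ:ℂ)*((starRingEnd ℂ) s1) - Complex.I*(σ:ℂ)) + Complex.I*(σ:ℂ))
          / (2*(ρ:ℂ)^2*((c:ℂ) + 4*(σ:ℂ)*(ρ:ℂ)*(t:ℂ))*(c:ℂ)
              + (ρ:ℂ)*(2*(ρ:ℂ)*s1 + Complex.I*(σ:ℂ))*(c:ℂ)
              - (ρ:ℂ)*(2*(ρ:ℂ)*((starRingEnd ℂ) s1) - Complex.I*(σ:ℂ))*((c:ℂ) + 4*(σ:ℂ)*(ρ:ℂ)*(t:ℂ))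
              - ((2*(ρ:ℂ)*s1 + Complex.I*(σ:ℂ))*(2*(ρ:ℂ)*((starRingEnd ℂ) s1) - Complex.I*(σ:ℂ)) + 1)/2))
      - (ρ:ℂ) * (1 - (4*(ρ:ℂ)*((c:ℂ) - (starRingEnd ℂ) s1) + 4*Complex.I*(σ:ℂ))
            / (2*(ρ:ℂ)*((c:ℂ) - (starRingEnd ℂ) s1) + Complex.I*(σ:ℂ))) := by
        simp only [u1sol]
        rw [h2]
        rw [show ((Complex.normSq (2 * (ρ:ℝ) * s1 + Complex.I * (σ:ℝ)) : ℂ)) =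
            (2 * (ρ:ℂ) * s1 + Complex.I * (σ:ℝ)) *
              (starRingEnd ℂ) (2 * (ρ:ℝ) * s1 + Complex.I * (σ:ℝ)) from
          (Complex.mul_conj _).symm]
        simp only [map_add, map_mul, map_ofNat, Complex.conj_ofReal, Complex.conj_I]
        push_cast
        ring
    _ = _ := by
        rw [halg, sol_Dlin]
        rfl

/-- Along the line `x = 2σρt + c` (so `η = c` fixed), the first-order rational solution
converges as `|t| → ∞` to the first asymptotic soliton profile, with error `O(1/|t|)`. -/
theorem first_order_rational_asymptotic_soliton (ρ σ φ c : ℝ) (hρ : 0 < ρ)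
    (hσ : σ = 1 ∨ σ = -1) (s1 : ℂ) (hs1 : s1.im ≠ -σ / (2 * ρ)) :
    (fun t : ℝ =>
        u1sol ρ σ φ s1 (2 * σ * ρ * t + c) t *
          Complex.exp (-(2 * Complex.I * ρ ^ 2 * t) - Complex.I * φ)
        - (ρ : ℂ) * (1 - (4 * ρ * ((c : ℂ) - (starRingEnd ℂ) s1) + 4 * Complex.I * σ) /
            (2 * ρ * ((c : ℂ) - (starRingEnd ℂ) s1) + Complex.I * σ)))
      =O[Filter.cocompact ℝ] (fun t : ℝ => 1 / |t|) ∧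
    Filter.Tendsto
      (fun t : ℝ =>
        u1sol ρ σ φ s1 (2 * σ * ρ * t + c) t *
          Complex.exp (-(2 * Complex.I * ρ ^ 2 * t) - Complex.I * φ))
      (Filter.cocompact ℝ)
      (nhds ((ρ : ℂ) * (1 - (4 * ρ * ((c : ℂ) - (starRingEnd ℂ) s1) + 4 * Complex.I * σ) /
        (2 * ρ * ((c : ℂ) - (starRingEnd ℂ) s1) + Complex.I * σ)))) := by
  -- A ≠ 0
  have hA : solA ρ σ c s1 ≠ 0 := by
    intro h
    have him : (solA ρ σ c s1).im = 2*ρ*s1.im + σ := by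
      simp [solA, Complex.add_im, Complex.mul_im, Complex.sub_im, Complex.conj_im]
    rw [h] at him
    simp at him
    apply hs1
    field_simp
    linarith
  have hσ0 : σ ≠ 0 := by rcases hσ with h | h <;> rw [h] <;> norm_num
  have hAl : solAl ρ σ c s1 ≠ 0 := by
    simp only [solAl]
    refine mul_ne_zero (mul_ne_zero (mul_ne_zero ?_ ?_) ?_) hA
    · norm_num
    · exact_mod_cast Complex.ofReal_ne_zero.mpr hσ0
    · exact pow_ne_zero 2 (Complex.ofReal_ne_zero.mpr hρ.ne')
  set A := solA ρ σ c s1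
  set Al := solAl ρ σ c s1
  set Be := solBe ρ σ c s1
  set Cn := solCn ρ σ c s1
  have hnAl : 0 < ‖Al‖ := norm_pos_iff.mpr hAl
  have hnA : 0 < ‖A‖ := norm_pos_iff.mpr hA
  set T : ℝ := max 1 ((2*‖Be‖+1)/‖Al‖) with hT
  have hev : ∀ᶠ t : ℝ in Filter.cocompact ℝ, T ≤ |t| := by
    have h1 : Filter.Tendsto (fun t : ℝ => |t|) (Filter.cocompact ℝ) Filter.atTop := by
      exact (tendsto_norm_cocompact_atTop (E := ℝ)).congr (fun t => Real.norm_eq_abs t)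
    exact h1.eventually_ge_atTop T
  -- main pointwise estimates
  have hmain : ∀ t : ℝ, T ≤ |t| →
      (Al * (t:ℂ) + Be ≠ 0) ∧
      ‖Cn / (A * (Al * (t:ℂ) + Be))‖ ≤ (2*‖Cn‖/(‖A‖*‖Al‖)) * (1/|t|) := by
    intro t ht
    have ht1 : (1:ℝ) ≤ |t| := le_trans (le_max_left _ _) ht
    have ht0 : (0:ℝ) < |t| := lt_of_lt_of_le one_pos ht1
    have ht2 : 2*‖Be‖+1 ≤ ‖Al‖*|t| := by
      have := le_trans (le_max_right 1 ((2*‖Be‖+1)/‖Al‖)) ht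
      calc 2*‖Be‖+1 = ((2*‖Be‖+1)/‖Al‖) * ‖Al‖ := (div_mul_cancel₀ _ hnAl.ne').symm
        _ ≤ |t| * ‖Al‖ := by
            apply mul_le_mul_of_nonneg_right this (le_of_lt hnAl)
        _ = ‖Al‖*|t| := by ring
    have hlow : ‖Al‖*|t|/2 ≤ ‖Al * (t:ℂ) + Be‖ := by
      have h3 : ‖Al * (t:ℂ)‖ ≤ ‖Al * (t:ℂ) + Be‖ + ‖Be‖ := by
        simpa using norm_sub_le (Al * (t:ℂ) + Be) Be
      have h4 : ‖Al * (t:ℂ)‖ = ‖Al‖*|t| := by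
        rw [norm_mul, Complex.norm_real, Real.norm_eq_abs]
      nlinarith [norm_nonneg (Al * (t:ℂ) + Be)]
    have hpos : (0:ℝ) < ‖Al * (t:ℂ) + Be‖ := by nlinarith
    have hne : Al * (t:ℂ) + Be ≠ 0 := norm_pos_iff.mp hpos
    refine ⟨hne, ?_⟩
    calc ‖Cn / (A * (Al * (t:ℂ) + Be))‖ = ‖Cn‖ / (‖A‖ * ‖Al * (t:ℂ) + Be‖) := by
          rw [norm_div, norm_mul]
      _ ≤ ‖Cn‖ / (‖A‖ * (‖Al‖*|t|/2)) := by
          gcongr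
      _ = (2*‖Cn‖/(‖A‖*‖Al‖)) * (1/|t|) := by
          field_simp
  -- the Big-O part
  have hbig : (fun t : ℝ =>
      u1sol ρ σ φ s1 (2 * σ * ρ * t + c) t *
        Complex.exp (-(2 * Complex.I * ρ ^ 2 * t) - Complex.I * φ)
      - (ρ : ℂ) * (1 - (4 * ρ * ((c : ℂ) - (starRingEnd ℂ) s1) + 4 * Complex.I * σ) /
          (2 * ρ * ((c : ℂ) - (starRingEnd ℂ) s1) + Complex.I * σ)))
      =O[Filter.cocompact ℝ] (fun t : ℝ => 1 / |t|) := by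
    apply Asymptotics.IsBigO.of_bound (2*‖Cn‖/(‖A‖*‖Al‖))
    filter_upwards [hev] with t ht
    obtain ⟨hne, hbound⟩ := hmain t ht
    rw [sol_key ρ σ φ c s1 hA t hne]
    have ht0 : (0:ℝ) < |t| := lt_of_lt_of_le one_pos (le_trans (le_max_left _ _) ht)
    calc ‖Cn / (A * (Al * (t:ℂ) + Be))‖
        ≤ (2*‖Cn‖/(‖A‖*‖Al‖)) * (1/|t|) := hbound
      _ = (2*‖Cn‖/(‖A‖*‖Al‖)) * ‖1/|t|‖ := by
          rw [Real.norm_eq_abs, _root_.abs_of_nonneg (by positivity : (0:ℝ) ≤ 1/|t|)]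
  refine ⟨hbig, ?_⟩
  have h1 : Filter.Tendsto (fun t : ℝ => 1/|t|) (Filter.cocompact ℝ) (nhds 0) := by
    have h2 : Filter.Tendsto (fun t : ℝ => |t|) (Filter.cocompact ℝ) Filter.atTop := by
      exact (tendsto_norm_cocompact_atTop (E := ℝ)).congr (fun t => Real.norm_eq_abs t)
    exact h2.inv_tendsto_atTop.congr (fun t => by simp [one_div])
  rw [← tendsto_sub_nhds_zero_iff]
  exact hbig.trans_tendsto h1
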